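/- Let T be a triangulated category, N a triangulated subcategory of T, and U, V subcategories such that (U, U^⊥) and (^⊥V, V) are torsion pairs in T. Set X = U ∩ V ∩ N and assume that X is closed under direct summands, that U^⊥[-1] ⊆ V ∩ N, and that (^⊥V)[1] = U ∩ N. Then for every distinguished triangle A →(s) B → N → A[1] with A, B ∈ U ∩ V and N ∈ N, there exists a morphism t: B → A such that 1_A − t∘s and 1_B − s∘t both factor through X (that is, (U, X, V) satisfies the Verdier condition). -/

import Mathlib

open CategoryTheory Category Limits Pretriangulated

universe v u

variable {T : Type u} [Category.{v} T] [HasZeroObject T] [HasShift T ℤ]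
  [Preadditive T] [∀ n : ℤ, (CategoryTheory.shiftFunctor T n).Additive] [Pretriangulated T]

namespace VerdierPaper

/-- A morphism factors through the subcategory `X`. -/
def FactorsThru (X : Set T) {A B : T} (f : A ⟶ B) : Prop :=
  ∃ (X₀ : T) (_ : X₀ ∈ X) (g : A ⟶ X₀) (h : X₀ ⟶ B), f = g ≫ h

/-- A triangulated subcategory: closed under isomorphisms, shifts in both directions,
contains a zero object, and two-out-of-three for distinguished triangles. -/
structure IsTriangulatedSub (N : Set T) : Prop where
  zero : ∃ Z ∈ N, IsZero Z
  closedIso : ∀ {A B : T}, (A ≅ B) → A ∈ N → B ∈ N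
  shift : ∀ A ∈ N, (A⟦(1 : ℤ)⟧) ∈ N
  unshift : ∀ A ∈ N, (A⟦(-1 : ℤ)⟧) ∈ N
  two_of_three₁₂ : ∀ Tr ∈ (distTriang T), Tr.obj₁ ∈ N → Tr.obj₂ ∈ N → Tr.obj₃ ∈ N
  two_of_three₂₃ : ∀ Tr ∈ (distTriang T), Tr.obj₂ ∈ N → Tr.obj₃ ∈ N → Tr.obj₁ ∈ N
  two_of_three₁₃ : ∀ Tr ∈ (distTriang T), Tr.obj₁ ∈ N → Tr.obj₃ ∈ N → Tr.obj₂ ∈ N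

/-- Closed under direct summands (retracts). -/
def ClosedUnderSummands (S : Set T) : Prop :=
  ∀ (X₀ A : T), X₀ ∈ S → ∀ (i : A ⟶ X₀) (r : X₀ ⟶ A), i ≫ r = 𝟙 A → A ∈ S

/-- `f : A ⟶ B` is `X`-monic: every morphism from `A` to an object of `X` extends along `f`. -/
def XMonic (X : Set T) {A B : T} (f : A ⟶ B) : Prop :=
  ∀ X₀ ∈ X, ∀ g : A ⟶ X₀, ∃ h : B ⟶ X₀, f ≫ h = g

/-- `f : A ⟶ B` is `X`-epic: every morphism from an object of `X` to `B` lifts along `f`. -/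
def XEpic (X : Set T) {A B : T} (f : A ⟶ B) : Prop :=
  ∀ X₀ ∈ X, ∀ g : X₀ ⟶ B, ∃ h : X₀ ⟶ A, h ≫ f = g

/-- An `X`-preenvelope: an `X`-monic with target in `X`. -/
def Preenvelope (X : Set T) {A X₀ : T} (f : A ⟶ X₀) : Prop :=
  X₀ ∈ X ∧ XMonic X f

/-- An `X`-precover: an `X`-epic with source in `X`. -/
def Precover (X : Set T) {X₀ B : T} (f : X₀ ⟶ B) : Prop :=
  X₀ ∈ X ∧ XEpic X f

/-- `U^{⊥,X}`: objects such that every morphism from an object of `U` factors through `X`. -/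
def perpRightX (U X : Set T) : Set T :=
  {W | ∀ U₀ ∈ U, ∀ f : U₀ ⟶ W, FactorsThru X f}

/-- `^{X,⊥}V`: objects such that every morphism to an object of `V` factors through `X`. -/
def perpLeftX (X V : Set T) : Set T :=
  {W | ∀ V₀ ∈ V, ∀ f : W ⟶ V₀, FactorsThru X f}

/-- A localization triple `(U, X, V)` of `T`. Triangles `A[-1] → W → Q → A` are
recorded in the rotated form `W → Q → A → W[1]`. -/
structure IsLocalizationTriple (U X V : Set T) : Prop where
  subU : X ⊆ U
  subV : X ⊆ V
  precover : ∀ A : T, ∃ (W Q : T) (w : W ⟶ Q) (r : Q ⟶ A) (d : A ⟶ W⟦(1 : ℤ)⟧),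
    Triangle.mk w r d ∈ (distTriang T) ∧ Precover U r ∧ W ∈ perpRightX U X
  preenvelope : ∀ A : T, ∃ (R W : T) (j : A ⟶ R) (t : R ⟶ W) (d : W ⟶ A⟦(1 : ℤ)⟧),
    Triangle.mk j t d ∈ (distTriang T) ∧ Preenvelope V j ∧ W ∈ perpLeftX X V
  precoverV : ∀ A ∈ V, ∃ (W Q : T) (w : W ⟶ Q) (r : Q ⟶ A) (d : A ⟶ W⟦(1 : ℤ)⟧),
    Triangle.mk w r d ∈ (distTriang T) ∧ Precover U r ∧ W ∈ perpRightX U X ∧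
    Q ∈ U ∩ V ∧ W ∈ V ∧ W ∈ perpRightX (U ∩ V) X
  preenvelopeU : ∀ A ∈ U, ∃ (R W : T) (j : A ⟶ R) (t : R ⟶ W) (d : W ⟶ A⟦(1 : ℤ)⟧),
    Triangle.mk j t d ∈ (distTriang T) ∧ Preenvelope V j ∧ W ∈ perpLeftX X V ∧
    R ∈ U ∩ V ∧ W ∈ U ∧ W ∈ perpLeftX X (U ∩ V)

/-- An `N`-localization triple. -/
structure IsNLocalizationTriple (N U X V : Set T) extends IsLocalizationTriple U X V : Prop where
  xEq : X = U ∩ V ∩ N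
  perpR_subset : perpRightX U X ⊆ N
  perpL_subset : perpLeftX X V ⊆ N

/-- The Verdier condition for an `N`-localization triple. -/
def VerdierCondition (N U X V : Set T) : Prop :=
  ∀ (A B N₀ : T) (s : A ⟶ B) (g : B ⟶ N₀) (h : N₀ ⟶ A⟦(1 : ℤ)⟧),
    Triangle.mk s g h ∈ (distTriang T) → A ∈ U ∩ V → B ∈ U ∩ V → N₀ ∈ N →
    ∃ t : B ⟶ A, FactorsThru X (𝟙 A - s ≫ t) ∧ FactorsThru X (𝟙 B - t ≫ s)


/-- A torsion pair `(Cc, Dd)` in `T`. -/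
def TorsionPair (Cc Dd : Set T) : Prop :=
  (∀ C₀ ∈ Cc, ∀ D₀ ∈ Dd, ∀ f : C₀ ⟶ D₀, f = 0) ∧
  ∀ A : T, ∃ (C₀ D₀ : T) (f : C₀ ⟶ A) (g : A ⟶ D₀) (h : D₀ ⟶ C₀⟦(1 : ℤ)⟧),
    Triangle.mk f g h ∈ (distTriang T) ∧ C₀ ∈ Cc ∧ D₀ ∈ Dd

/-- `U^⊥`. -/
def rightPerp (U : Set T) : Set T := {A | ∀ U₀ ∈ U, ∀ f : U₀ ⟶ A, f = 0}

/-- `^⊥V`. -/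
def leftPerp (V : Set T) : Set T := {A | ∀ V₀ ∈ V, ∀ f : A ⟶ V₀, f = 0}


section Aux

variable {N U V X : Set T}

lemma factorsThru_precomp {A B C : T} {f : A ⟶ B} (hf : FactorsThru X f) (e : C ⟶ A) :
    FactorsThru X (e ≫ f) := by
  obtain ⟨X₀, hX₀, p, q, rfl⟩ := hf
  exact ⟨X₀, hX₀, e ≫ p, q, by simp⟩

lemma factorsThru_postcomp {A B C : T} {f : A ⟶ B} (hf : FactorsThru X f) (e : B ⟶ C) :
    FactorsThru X (f ≫ e) := by
  obtain ⟨X₀, hX₀, p, q, rfl⟩ := hf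
  exact ⟨X₀, hX₀, p, q ≫ e, by simp⟩

lemma rightPerp_iso {A B : T} (e : A ≅ B) (hA : A ∈ rightPerp U) : B ∈ rightPerp U := by
  intro U₀ hU₀ f
  have h0 : f ≫ e.inv = 0 := hA U₀ hU₀ (f ≫ e.inv)
  have h1 := congrArg (fun φ => φ ≫ e.hom) h0
  simpa using h1

lemma hom_vanish (h2 : ∀ A : T, (A⟦(-1 : ℤ)⟧) ∈ leftPerp V ↔ A ∈ U ∩ N)
    {K L : T} (hKU : K ∈ U) (hKN : K ∈ N) (hLV : L ∈ V) (φ : K ⟶ L⟦(1 : ℤ)⟧) : φ = 0 := by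
  have hK : (K⟦(-1 : ℤ)⟧) ∈ leftPerp V := (h2 K).mpr ⟨hKU, hKN⟩
  have e := shiftFunctorCompIsoId T (-1 : ℤ) (1 : ℤ) (by ring)
  obtain ⟨χ₀, hχ₀⟩ := (shiftFunctor T (1 : ℤ)).map_surjective (e.hom.app K ≫ φ)
  have h0 : χ₀ = 0 := hK L hLV χ₀
  have hz : e.hom.app K ≫ φ = 0 := by rw [← hχ₀, h0, Functor.map_zero]
  calc φ = e.inv.app K ≫ (e.hom.app K ≫ φ) := by
          rw [← Category.assoc, Iso.inv_hom_id_app, Category.id_comp]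
    _ = 0 := by rw [hz, comp_zero]

lemma key1 (hX : X = U ∩ V ∩ N)
    (htpV : TorsionPair (leftPerp V) V)
    (h2 : ∀ A : T, (A⟦(-1 : ℤ)⟧) ∈ leftPerp V ↔ A ∈ U ∩ N)
    {K L : T} (hKU : K ∈ U) (hKN : K ∈ N) (hLV : L ∈ V) (f : K ⟶ L) :
    FactorsThru X f := by
  obtain ⟨Z, V₀, a, b, c, hdt, hZ, hV₀⟩ := htpV.2 K
  have haf : a ≫ f = 0 := hZ L hLV (a ≫ f)
  obtain ⟨f', hf'⟩ := Triangle.yoneda_exact₂ _ hdt f haf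
  have hV₀UN : V₀ ∈ U ∩ N := by
    refine (h2 V₀).mp ?_
    intro V' hV' ψ
    have e := shiftFunctorCompIsoId T (-1 : ℤ) (1 : ℤ) (by ring)
    set ψ' : V₀ ⟶ V'⟦(1 : ℤ)⟧ := e.inv.app V₀ ≫ (shiftFunctor T (1 : ℤ)).map ψ with hψ'def
    have hbψ' : b ≫ ψ' = 0 := hom_vanish h2 hKU hKN hV' (b ≫ ψ')
    obtain ⟨ψ'', hψ''⟩ := Triangle.yoneda_exact₂ _ (rot_of_distTriang _ hdt) ψ' hbψ'
    obtain ⟨ψ₀, hψ₀⟩ := (shiftFunctor T (1 : ℤ)).map_surjective ψ''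
    have hψ₀0 : ψ₀ = 0 := hZ V' hV' ψ₀
    have hψ'0 : ψ' = 0 := by rw [hψ'', ← hψ₀, hψ₀0, Functor.map_zero]; exact comp_zero
    have hmψ : (shiftFunctor T (1 : ℤ)).map ψ = 0 := by
      have := hψ'0
      rw [hψ'def] at this
      calc (shiftFunctor T (1 : ℤ)).map ψ
          = e.hom.app V₀ ≫ (e.inv.app V₀ ≫ (shiftFunctor T (1 : ℤ)).map ψ) := by
            rw [← Category.assoc, Iso.hom_inv_id_app, Category.id_comp]
        _ = 0 := by rw [this, comp_zero]
    exact (shiftFunctor T (1 : ℤ)).map_injective (by rw [hmψ, Functor.map_zero])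
  refine ⟨V₀, ?_, b, f', hf'⟩
  rw [hX]
  exact ⟨⟨hV₀UN.1, hV₀⟩, hV₀UN.2⟩

lemma key2 (hX : X = U ∩ V ∩ N) (hN : IsTriangulatedSub N)
    (htpU : TorsionPair U (rightPerp U)) (htpV : TorsionPair (leftPerp V) V)
    (h1 : ∀ A : T, (A⟦(1 : ℤ)⟧) ∈ rightPerp U → A ∈ V ∩ N)
    (h2 : ∀ A : T, (A⟦(-1 : ℤ)⟧) ∈ leftPerp V ↔ A ∈ U ∩ N)
    {K L : T} (hKU : K ∈ U) (hLV : L ∈ V) (hLN : L ∈ N) (f : K ⟶ L) :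
    FactorsThru X f := by
  obtain ⟨W', R', a, b, c, hdt, hW', hR'⟩ := htpU.2 L
  have eR := (shiftFunctorCompIsoId T (-1 : ℤ) (1 : ℤ) (by ring)).app R'
  have hRm : (R'⟦(-1 : ℤ)⟧) ∈ V ∩ N := h1 _ (rightPerp_iso eR.symm hR')
  have hR'N : R' ∈ N := hN.closedIso eR (hN.shift _ hRm.2)
  have hW'N : W' ∈ N := hN.two_of_three₂₃ _ hdt hLN hR'N
  have hfb : f ≫ b = 0 := hR' K hKU (f ≫ b)
  obtain ⟨f₁, hf₁⟩ := Triangle.coyoneda_exact₂ _ hdt f hfb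
  have ha : FactorsThru X a := key1 hX htpV h2 hW' hW'N hLV a
  rw [hf₁]
  exact factorsThru_precomp ha f₁

end Aux

theorem statement_5 (N U V X : Set T) (hN : IsTriangulatedSub N)
    (htpU : TorsionPair U (rightPerp U)) (htpV : TorsionPair (leftPerp V) V)
    (hX : X = U ∩ V ∩ N) (hXsumm : ClosedUnderSummands X)
    (h1 : ∀ A : T, (A⟦(1 : ℤ)⟧) ∈ rightPerp U → A ∈ V ∩ N)
    (h2 : ∀ A : T, (A⟦(-1 : ℤ)⟧) ∈ leftPerp V ↔ A ∈ U ∩ N) :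
    VerdierCondition N U X V := by
  intro A B N₀ s g hh hdt hAm hBm hNm
  obtain ⟨W, R, w, r, δ, hdt2, hWU, hRperp⟩ := htpU.2 N₀
  have eR := (shiftFunctorCompIsoId T (-1 : ℤ) (1 : ℤ) (by ring)).app R
  have hRm : (R⟦(-1 : ℤ)⟧) ∈ V ∩ N := h1 _ (rightPerp_iso eR.symm hRperp)
  have hRN : R ∈ N := hN.closedIso eR (hN.shift _ hRm.2)
  have hWN : W ∈ N := hN.two_of_three₂₃ _ hdt2 hNm hRN
  have hgr : g ≫ r = 0 := hRperp B hBm.1 (g ≫ r)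
  have hwh : w ≫ hh = 0 := hom_vanish h2 hWU hWN hAm.2 (w ≫ hh)
  -- construction of t₁
  obtain ⟨g'0, hg'0⟩ := Triangle.coyoneda_exact₂ _ hdt2 g hgr
  let g' : B ⟶ W := g'0
  have hg' : g = g' ≫ w := hg'0
  obtain ⟨w'0, hw'0⟩ := Triangle.coyoneda_exact₃ _ hdt w hwh
  let w' : W ⟶ B := w'0
  have hw' : w = w' ≫ g := hw'0
  have hfac1 : (𝟙 B - g' ≫ w') ≫ g = 0 := by
    rw [Preadditive.sub_comp, Category.id_comp, Category.assoc, ← hw', ← hg', sub_self]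
  obtain ⟨t₁0, ht₁0⟩ := Triangle.coyoneda_exact₂ _ hdt (𝟙 B - g' ≫ w') hfac1
  let t₁ : B ⟶ A := t₁0
  have ht₁ : 𝟙 B - g' ≫ w' = t₁ ≫ s := ht₁0
  -- construction of t₂
  obtain ⟨p'0, hp'0⟩ := Triangle.yoneda_exact₂ _ hdt2 hh hwh
  let p' : R ⟶ (A⟦(1 : ℤ)⟧) := p'0
  have hp' : hh = r ≫ p' := hp'0
  obtain ⟨k'0, hk'0⟩ := Triangle.yoneda_exact₃ _ hdt r hgr
  let k' : (A⟦(1 : ℤ)⟧) ⟶ R := k'0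
  have hk' : r = hh ≫ k' := hk'0
  have hfac2 : hh ≫ (𝟙 (A⟦(1 : ℤ)⟧) - k' ≫ p') = 0 := by
    rw [Preadditive.comp_sub, Category.comp_id, ← Category.assoc, ← hk', ← hp', sub_self]
  obtain ⟨τ0, hτ0⟩ := Triangle.yoneda_exact₃ _ (rot_of_distTriang _ hdt)
    (𝟙 (A⟦(1 : ℤ)⟧) - k' ≫ p') hfac2
  let τ : (B⟦(1 : ℤ)⟧) ⟶ (A⟦(1 : ℤ)⟧) := τ0
  have hτ : 𝟙 (A⟦(1 : ℤ)⟧) - k' ≫ p' = (-((shiftFunctor T (1 : ℤ)).map s)) ≫ τ := hτ0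
  obtain ⟨t₂', ht₂'⟩ := (shiftFunctor T (1 : ℤ)).map_surjective τ
  set t₂ : B ⟶ A := -t₂' with ht₂def
  have hτ' : 𝟙 (A⟦(1 : ℤ)⟧) - k' ≫ p'
      = (-((shiftFunctor T (1 : ℤ)).map s)) ≫ (shiftFunctor T (1 : ℤ)).map t₂' := by
    rw [ht₂']; exact hτ
  have hshift : (shiftFunctor T (1 : ℤ)).map (𝟙 A - s ≫ t₂) = k' ≫ p' := by
    rw [Functor.map_sub, CategoryTheory.Functor.map_id, CategoryTheory.Functor.map_comp, ht₂def, Functor.map_neg]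
    have hkp : k' ≫ p' = 𝟙 (A⟦(1 : ℤ)⟧) - (𝟙 (A⟦(1 : ℤ)⟧) - k' ≫ p') := by abel
    rw [hkp, hτ']
    simp only [Preadditive.neg_comp, Preadditive.comp_neg]
    try abel
  have ε := shiftFunctorCompIsoId T (1 : ℤ) (-1 : ℤ) (by ring)
  have hnat : (shiftFunctor T (-1 : ℤ)).map ((shiftFunctor T (1 : ℤ)).map (𝟙 A - s ≫ t₂))
      ≫ ε.hom.app A = ε.hom.app A ≫ (𝟙 A - s ≫ t₂) := ε.hom.naturality (𝟙 A - s ≫ t₂)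
  have hf2 : 𝟙 A - s ≫ t₂ = (ε.inv.app A ≫ (shiftFunctor T (-1 : ℤ)).map k')
      ≫ ((shiftFunctor T (-1 : ℤ)).map p' ≫ ε.hom.app A) := by
    rw [hshift, Functor.map_comp] at hnat
    calc 𝟙 A - s ≫ t₂ = ε.inv.app A ≫ (ε.hom.app A ≫ (𝟙 A - s ≫ t₂)) := by
          rw [← Category.assoc, Iso.inv_hom_id_app, Category.id_comp]
      _ = _ := by rw [← hnat]; simp only [Category.assoc]
  have hk₀ : FactorsThru X (ε.inv.app A ≫ (shiftFunctor T (-1 : ℤ)).map k') :=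
    key2 hX hN htpU htpV h1 h2 hAm.1 hRm.1 hRm.2 _
  have hFf2 : FactorsThru X (𝟙 A - s ≫ t₂) := by
    rw [hf2]; exact factorsThru_postcomp hk₀ _
  have hw'X : FactorsThru X w' := key1 hX htpV h2 hWU hWN hBm.2 w'
  have hFf1 : FactorsThru X (𝟙 B - t₁ ≫ s) := by
    have he : 𝟙 B - t₁ ≫ s = g' ≫ w' := by rw [← ht₁]; abel
    rw [he]; exact factorsThru_precomp hw'X g'
  refine ⟨t₁ + t₂ - t₂ ≫ s ≫ t₁, ?_, ?_⟩
  · have he : 𝟙 A - s ≫ (t₁ + t₂ - t₂ ≫ s ≫ t₁) = (𝟙 A - s ≫ t₂) ≫ (𝟙 A - s ≫ t₁) := by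
      simp only [Preadditive.comp_sub, Preadditive.sub_comp, Preadditive.comp_add,
        Preadditive.add_comp, Category.assoc, Category.comp_id, Category.id_comp]
      abel
    rw [he]; exact factorsThru_postcomp hFf2 _
  · have he : 𝟙 B - (t₁ + t₂ - t₂ ≫ s ≫ t₁) ≫ s = (𝟙 B - t₂ ≫ s) ≫ (𝟙 B - t₁ ≫ s) := by
      simp only [Preadditive.comp_sub, Preadditive.sub_comp, Preadditive.comp_add,
        Preadditive.add_comp, Category.assoc, Category.comp_id, Category.id_comp]
      abel
    rw [he]; exact factorsThru_precomp hFf1 _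

end VerdierPaper
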